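/- Define monic polynomials A_{n,2}(X) by A_{0,2}(X)=1, A_{1,2}(X)=X-720, and A_{n+1,2}(X) = (X - a_n)A_{n,2}(X) - b_n A_{n-1,2}(X) for n ≥ 2 with initial A_{2,2}(X) = X² - 1640X + 269280, where a_n = 24(144n²-29)/((2n+1)(2n-1)) and b_n = 36(12n-13)(12n-7)(12n-5)(12n+1)/(n(n-1)(2n-1)²). Then A_{n,2}(0) = (-12)^{3n+1} (-1/12)_n (5/12)_n / (2n-1)! for all n ≥ 1, where (a)_n denotes the Pochhammer symbol. -/

import Mathlib

open Polynomial

/-- Recursion coefficient `a_{n,2} = 24(144n²-29)/((2n+1)(2n-1))`. -/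
noncomputable def a2 (n : ℕ) : ℚ :=
  24 * (144 * (n : ℚ) ^ 2 - 29) / ((2 * (n : ℚ) + 1) * (2 * (n : ℚ) - 1))

/-- Recursion coefficient `b_{n,2} = 36(12n-13)(12n-7)(12n-5)(12n+1)/(n(n-1)(2n-1)²)`. -/
noncomputable def b2 (n : ℕ) : ℚ :=
  36 * (12 * (n : ℚ) - 13) * (12 * (n : ℚ) - 7) * (12 * (n : ℚ) - 5) * (12 * (n : ℚ) + 1) /
    ((n : ℚ) * ((n : ℚ) - 1) * (2 * (n : ℚ) - 1) ^ 2)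

/-- The monic Atkin polynomials `A_{n,2}(X)`, defined by the three-term recursion
`A_{n+1,2} = (X - a_n)A_{n,2} - b_n A_{n-1,2}` for `n ≥ 2`. -/
noncomputable def A2 : ℕ → Polynomial ℚ
  | 0 => 1
  | 1 => X - C 720
  | 2 => X ^ 2 - C 1640 * X + C 269280
  | n + 3 => (X - C (a2 (n + 2))) * A2 (n + 2) - C (b2 (n + 2)) * A2 (n + 1)

lemma A2_aux (k : ℕ) :
    (A2 (k+1)).eval 0 =
      (-12 : ℚ) ^ (3 * (k+1) + 1) * (ascPochhammer ℚ (k+1)).eval (-1 / 12 : ℚ) *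
        (ascPochhammer ℚ (k+1)).eval (5 / 12 : ℚ) / ((2 * (k+1) - 1).factorial : ℚ) := by
  induction k using Nat.twoStepInduction with
  | zero => norm_num [A2, ascPochhammer_succ_eval, ascPochhammer_zero]
  | one => norm_num [A2, ascPochhammer_succ_eval, ascPochhammer_zero, Nat.factorial]
  | more k ih2 ih1 =>
    have e3 : (A2 (k+1+1+1)).eval 0
        = (0 - a2 (k+2)) * (A2 (k+2)).eval 0 - b2 (k+2) * (A2 (k+1)).eval 0 := by
      rw [show k+1+1+1 = k+3 from rfl, A2]
      simp
    have hfac2 : ((2 * (k+1+1) - 1).factorial : ℚ)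
        = ((2 * (k+1) - 1).factorial : ℚ) * ((2*k+2) * (2*k+3)) := by
      rw [show 2*(k+1+1)-1 = (2*k+2)+1 by omega, show 2*(k+1)-1 = 2*k+1 by omega,
          Nat.factorial_succ, show 2*k+2 = (2*k+1)+1 from rfl, Nat.factorial_succ]
      push_cast; ring
    have hfac3 : ((2 * (k+1+1+1) - 1).factorial : ℚ)
        = ((2 * (k+1) - 1).factorial : ℚ) * ((2*k+2) * (2*k+3) * (2*k+4) * (2*k+5)) := by
      rw [show 2*(k+1+1+1)-1 = (2*k+4)+1 by omega, Nat.factorial_succ,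
          show 2*k+4 = (2*k+3)+1 from rfl, Nat.factorial_succ,
          show 2*k+3 = (2*k+2)+1 from rfl, Nat.factorial_succ,
          show 2*k+2 = (2*(k+1)-1)+1 by omega, Nat.factorial_succ]
      push_cast
      have : ((2*(k+1)-1 : ℕ) : ℚ) = 2*k+1 := by
        have : 2*(k+1)-1 = 2*k+1 := by omega
        rw [this]; push_cast; ring
      rw [this]; ring
    rw [show (k+2 : ℕ)+1 = k+1+1+1 from rfl] at *
    rw [show (k+2 : ℕ) = k+1+1 from rfl] at *
    rw [e3, ih1, ih2, hfac2, hfac3]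
    simp only [ascPochhammer_succ_eval]
    have hF : ((2 * (k+1) - 1).factorial : ℚ) ≠ 0 := by positivity
    rw [a2, b2]
    push_cast
    have h1 : (2*(k:ℚ)+2) ≠ 0 := by positivity
    have h2 : (2*(k:ℚ)+3) ≠ 0 := by positivity
    have h3 : (2*(k:ℚ)+4) ≠ 0 := by positivity
    have h4 : (2*(k:ℚ)+5) ≠ 0 := by positivity
    have h5 : ((k:ℚ)+1) ≠ 0 := by positivity
    have h6 : ((k:ℚ)+2) ≠ 0 := by positivity
    have h7 : (2*((k:ℚ)+1+1)+1) ≠ 0 := by positivity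
    have h8 : (2*((k:ℚ)+1+1)-1) ≠ 0 := by
      have : 2*((k:ℚ)+1+1)-1 = 2*k+3 := by ring
      rw [this]; positivity
    rw [show 2*((k:ℚ)+1+1)-1 = 2*k+3 by ring, show (k:ℚ)+1+1-1 = k+1 by ring]
    field_simp
    ring

/-- `A_{n,2}(0) = (-12)^{3n+1} (-1/12)ₙ (5/12)ₙ / (2n-1)!` for all `n ≥ 1`. -/
theorem A2_eval_zero (n : ℕ) (hn : 1 ≤ n) :
    (A2 n).eval 0 =
      (-12 : ℚ) ^ (3 * n + 1) * (ascPochhammer ℚ n).eval (-1 / 12 : ℚ) *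
        (ascPochhammer ℚ n).eval (5 / 12 : ℚ) / ((2 * n - 1).factorial : ℚ) := by
  obtain ⟨k, rfl⟩ := Nat.exists_eq_add_of_le hn
  rw [show 1 + k = k + 1 by omega]
  exact A2_aux k
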